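/- arXiv:math/0303204 — 2 statements merged into one kernel-verified Lean document; each statement's English description precedes it below -/
import Mathlib

section
/- Let r ≥ 2 be an integer, z ∈ ℂ, and u_0, u_1, …, u_{r−1} ∈ ℂ. Define the well-poised balanced term ratio h(x) = z · (∏_{m=1}^{r−1} [x+u_0+u_m]/[x+u_0−u_m]) · [x+u_0−∑_{k=1}^{r−1}u_k]/[x+u_0+∑_{k=1}^{r−1}u_k]. Then h is an elliptic function of x and of each of the parameters u_0, u_1, …, u_{r−1} separately, all with the same periods σ⁻¹ and τσ⁻¹: wherever all denominators involved are nonzero, h is unchanged when any one of the variables x, u_0, u_1, …, u_{r−1} is shifted by σ⁻¹ or by τσ⁻¹. -/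
open scoped BigOperators

/-- The Jacobi theta function
`θ₁(u;σ,τ) = -i ∑_{n ∈ ℤ} (-1)ⁿ e^{πiτ(n+1/2)²} e^{2πiσ(n+1/2)u}`. -/
noncomputable def theta1 (u σ τ : ℂ) : ℂ :=
  -Complex.I * ∑' n : ℤ, (-1 : ℂ) ^ n *
    Complex.exp ((Real.pi : ℂ) * Complex.I * τ * ((n : ℂ) + 1 / 2) ^ 2) *
    Complex.exp (2 * (Real.pi : ℂ) * Complex.I * σ * ((n : ℂ) + 1 / 2) * u)

private lemma theta1_add_inv (σ τ a : ℂ) (hσ : σ ≠ 0) :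
    theta1 (a + σ⁻¹) σ τ = -theta1 a σ τ := by
  unfold theta1
  have h : ∀ n : ℤ, (-1 : ℂ) ^ n *
      Complex.exp ((Real.pi : ℂ) * Complex.I * τ * ((n : ℂ) + 1 / 2) ^ 2) *
      Complex.exp (2 * (Real.pi : ℂ) * Complex.I * σ * ((n : ℂ) + 1 / 2) * (a + σ⁻¹)) =
      -((-1 : ℂ) ^ n *
      Complex.exp ((Real.pi : ℂ) * Complex.I * τ * ((n : ℂ) + 1 / 2) ^ 2) *
      Complex.exp (2 * (Real.pi : ℂ) * Complex.I * σ * ((n : ℂ) + 1 / 2) * a)) := by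
    intro n
    have e1 : 2 * (Real.pi : ℂ) * Complex.I * σ * ((n : ℂ) + 1 / 2) * (a + σ⁻¹) =
        2 * (Real.pi : ℂ) * Complex.I * σ * ((n : ℂ) + 1 / 2) * a +
        ((n : ℂ) * (2 * (Real.pi : ℂ) * Complex.I) + (Real.pi : ℂ) * Complex.I) := by
      field_simp
    rw [e1, Complex.exp_add, Complex.exp_add]
    rw [show ((n : ℂ) * (2 * (Real.pi : ℂ) * Complex.I)) =
      ((n : ℤ) : ℂ) * (2 * (Real.pi : ℂ) * Complex.I) by norm_num]
    rw [Complex.exp_int_mul_two_pi_mul_I, Complex.exp_pi_mul_I]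
    ring
  rw [tsum_congr h, tsum_neg]
  ring

private lemma exp3 (w A B D A' B' : ℂ) (hE : A + B = D + A' + B') :
    w * Complex.exp A * Complex.exp B =
      -Complex.exp D * (w * (-1) * Complex.exp A' * Complex.exp B') := by
  rw [mul_assoc, ← Complex.exp_add, hE, Complex.exp_add, Complex.exp_add]
  ring

private lemma theta1_add_tau (σ τ a : ℂ) (hσ : σ ≠ 0) :
    theta1 (a + τ * σ⁻¹) σ τ =
      -Complex.exp (-((Real.pi : ℂ) * Complex.I * τ) - 2 * (Real.pi : ℂ) * Complex.I * σ * a) *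
        theta1 a σ τ := by
  unfold theta1
  set c : ℂ := Complex.exp (-((Real.pi : ℂ) * Complex.I * τ) -
      2 * (Real.pi : ℂ) * Complex.I * σ * a) with hc
  set g : ℤ → ℂ := fun n => (-1 : ℂ) ^ n *
      Complex.exp ((Real.pi : ℂ) * Complex.I * τ * ((n : ℂ) + 1 / 2) ^ 2) *
      Complex.exp (2 * (Real.pi : ℂ) * Complex.I * σ * ((n : ℂ) + 1 / 2) * a) with hg
  have h : ∀ n : ℤ, (-1 : ℂ) ^ n *
      Complex.exp ((Real.pi : ℂ) * Complex.I * τ * ((n : ℂ) + 1 / 2) ^ 2) *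
      Complex.exp (2 * (Real.pi : ℂ) * Complex.I * σ * ((n : ℂ) + 1 / 2) * (a + τ * σ⁻¹)) =
      -c * g (n + 1) := by
    intro n
    rw [hg, hc]
    simp only []
    rw [zpow_add_one₀ (by norm_num : (-1 : ℂ) ≠ 0)]
    push_cast
    exact exp3 _ _ _ _ _ _ (by field_simp; ring)
  rw [tsum_congr h, tsum_mul_left]
  rw [show (∑' n : ℤ, g (n + 1)) = ∑' n : ℤ, g n from by
    have := (Equiv.addRight (1 : ℤ)).tsum_eq g
    simpa using this]
  ring

private lemma theta1_sub_inv (σ τ a : ℂ) (hσ : σ ≠ 0) :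
    theta1 (a - σ⁻¹) σ τ = -theta1 a σ τ := by
  have h := theta1_add_inv σ τ (a - σ⁻¹) hσ
  rw [sub_add_cancel] at h
  linear_combination h

private lemma theta1_sub_tau (σ τ a : ℂ) (hσ : σ ≠ 0) :
    theta1 (a - τ * σ⁻¹) σ τ =
      -Complex.exp (-((Real.pi : ℂ) * Complex.I * τ) + 2 * (Real.pi : ℂ) * Complex.I * σ * a) *
        theta1 a σ τ := by
  have h := theta1_add_tau σ τ (a - τ * σ⁻¹) hσ
  rw [sub_add_cancel] at h
  have hz : Complex.exp (-((Real.pi : ℂ) * Complex.I * τ) + 2 * (Real.pi : ℂ) * Complex.I * σ * a) *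
      Complex.exp (-((Real.pi : ℂ) * Complex.I * τ) -
        2 * (Real.pi : ℂ) * Complex.I * σ * (a - τ * σ⁻¹)) = 1 := by
    rw [← Complex.exp_add, show (-((Real.pi : ℂ) * Complex.I * τ) +
      2 * (Real.pi : ℂ) * Complex.I * σ * a) +
      (-((Real.pi : ℂ) * Complex.I * τ) -
        2 * (Real.pi : ℂ) * Complex.I * σ * (a - τ * σ⁻¹)) = 0 from by
      field_simp; ring, Complex.exp_zero]
  linear_combination (Complex.exp (-((Real.pi : ℂ) * Complex.I * τ) +
    2 * (Real.pi : ℂ) * Complex.I * σ * a)) * h - theta1 (a - τ * σ⁻¹) σ τ * hz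

private lemma Hx (σ τ : ℂ) (hσ : σ ≠ 0) {n : ℕ} (z ω : ℂ) (hω : ω = σ⁻¹ ∨ ω = τ * σ⁻¹)
    (x u₀ : ℂ) (u : Fin n → ℂ) :
    z * (∏ m, theta1 (x + ω + u₀ + u m) σ τ / theta1 (x + ω + u₀ - u m) σ τ) *
      (theta1 (x + ω + u₀ - ∑ k, u k) σ τ / theta1 (x + ω + u₀ + ∑ k, u k) σ τ) =
    z * (∏ m, theta1 (x + u₀ + u m) σ τ / theta1 (x + u₀ - u m) σ τ) *
      (theta1 (x + u₀ - ∑ k, u k) σ τ / theta1 (x + u₀ + ∑ k, u k) σ τ) := by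
  rcases hω with rfl | rfl
  · have h1 : ∀ a : ℂ, theta1 (x + σ⁻¹ + u₀ + a) σ τ = -theta1 (x + u₀ + a) σ τ := fun a => by
      rw [show x + σ⁻¹ + u₀ + a = (x + u₀ + a) + σ⁻¹ by ring]; exact theta1_add_inv σ τ _ hσ
    have h2 : ∀ a : ℂ, theta1 (x + σ⁻¹ + u₀ - a) σ τ = -theta1 (x + u₀ - a) σ τ := fun a => by
      rw [show x + σ⁻¹ + u₀ - a = (x + u₀ - a) + σ⁻¹ by ring]; exact theta1_add_inv σ τ _ hσ
    simp only [h1, h2, neg_div_neg_eq]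
  · have h1 : ∀ a : ℂ, theta1 (x + τ * σ⁻¹ + u₀ + a) σ τ =
        -Complex.exp (-((Real.pi : ℂ) * Complex.I * τ) -
          2 * (Real.pi : ℂ) * Complex.I * σ * (x + u₀ + a)) * theta1 (x + u₀ + a) σ τ := fun a => by
      rw [show x + τ * σ⁻¹ + u₀ + a = (x + u₀ + a) + τ * σ⁻¹ by ring]
      exact theta1_add_tau σ τ _ hσ
    have h2 : ∀ a : ℂ, theta1 (x + τ * σ⁻¹ + u₀ - a) σ τ =
        -Complex.exp (-((Real.pi : ℂ) * Complex.I * τ) -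
          2 * (Real.pi : ℂ) * Complex.I * σ * (x + u₀ - a)) * theta1 (x + u₀ - a) σ τ := fun a => by
      rw [show x + τ * σ⁻¹ + u₀ - a = (x + u₀ - a) + τ * σ⁻¹ by ring]
      exact theta1_add_tau σ τ _ hσ
    have hfac : ∀ (a b A B : ℂ), (-Complex.exp a * A) / (-Complex.exp b * B) =
        Complex.exp (a - b) * (A / B) := by
      intro a b A B
      rw [neg_mul, neg_mul, neg_div_neg_eq, mul_div_mul_comm, Complex.exp_sub]
    simp only [h1, h2, hfac]
    rw [Finset.prod_mul_distrib, ← Complex.exp_sum]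
    have hsum : (∑ m, ((-((Real.pi : ℂ) * Complex.I * τ) -
        2 * (Real.pi : ℂ) * Complex.I * σ * (x + u₀ + u m)) -
        (-((Real.pi : ℂ) * Complex.I * τ) -
          2 * (Real.pi : ℂ) * Complex.I * σ * (x + u₀ - u m)))) =
        -(4 * (Real.pi : ℂ) * Complex.I * σ * ∑ k, u k) := by
      rw [Finset.mul_sum, ← Finset.sum_neg_distrib]
      exact Finset.sum_congr rfl fun m _ => by ring
    rw [hsum]
    have hone : Complex.exp (-(4 * (Real.pi : ℂ) * Complex.I * σ * ∑ k, u k)) *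
        Complex.exp ((-((Real.pi : ℂ) * Complex.I * τ) -
          2 * (Real.pi : ℂ) * Complex.I * σ * (x + u₀ - ∑ k, u k)) -
          (-((Real.pi : ℂ) * Complex.I * τ) -
            2 * (Real.pi : ℂ) * Complex.I * σ * (x + u₀ + ∑ k, u k))) = 1 := by
      rw [← Complex.exp_add, show (-(4 * (Real.pi : ℂ) * Complex.I * σ * ∑ k, u k)) +
        ((-((Real.pi : ℂ) * Complex.I * τ) -
          2 * (Real.pi : ℂ) * Complex.I * σ * (x + u₀ - ∑ k, u k)) -
          (-((Real.pi : ℂ) * Complex.I * τ) -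
            2 * (Real.pi : ℂ) * Complex.I * σ * (x + u₀ + ∑ k, u k))) = 0 from by ring,
        Complex.exp_zero]
    linear_combination (z * (∏ m, theta1 (x + u₀ + u m) σ τ / theta1 (x + u₀ - u m) σ τ) *
      (theta1 (x + u₀ - ∑ k, u k) σ τ / theta1 (x + u₀ + ∑ k, u k) σ τ)) * hone

private lemma Hu (σ τ : ℂ) (hσ : σ ≠ 0) {n : ℕ} (z ω : ℂ) (hω : ω = σ⁻¹ ∨ ω = τ * σ⁻¹)
    (x u₀ : ℂ) (u : Fin n → ℂ) (i : Fin n) :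
    z * (∏ m, theta1 (x + u₀ + Function.update u i (u i + ω) m) σ τ /
        theta1 (x + u₀ - Function.update u i (u i + ω) m) σ τ) *
      (theta1 (x + u₀ - ∑ k, Function.update u i (u i + ω) k) σ τ /
        theta1 (x + u₀ + ∑ k, Function.update u i (u i + ω) k) σ τ) =
    z * (∏ m, theta1 (x + u₀ + u m) σ τ / theta1 (x + u₀ - u m) σ τ) *
      (theta1 (x + u₀ - ∑ k, u k) σ τ / theta1 (x + u₀ + ∑ k, u k) σ τ) := by
  have hsum : ∑ k, Function.update u i (u i + ω) k = (∑ k, u k) + ω := by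
    rw [Finset.sum_update_of_mem (Finset.mem_univ i)]
    rw [← Finset.add_sum_erase Finset.univ u (Finset.mem_univ i)]
    rw [Finset.sdiff_singleton_eq_erase]
    ring
  have hP : ∀ v : Fin n → ℂ,
      (∏ m, theta1 (x + u₀ + v m) σ τ / theta1 (x + u₀ - v m) σ τ) =
      (theta1 (x + u₀ + v i) σ τ / theta1 (x + u₀ - v i) σ τ) *
        ∏ m ∈ Finset.univ.erase i, theta1 (x + u₀ + v m) σ τ / theta1 (x + u₀ - v m) σ τ :=
    fun v => (Finset.mul_prod_erase Finset.univ _ (Finset.mem_univ i)).symm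
  have herase : (∏ m ∈ Finset.univ.erase i,
        theta1 (x + u₀ + Function.update u i (u i + ω) m) σ τ /
          theta1 (x + u₀ - Function.update u i (u i + ω) m) σ τ) =
      ∏ m ∈ Finset.univ.erase i, theta1 (x + u₀ + u m) σ τ / theta1 (x + u₀ - u m) σ τ :=
    Finset.prod_congr rfl fun m hm => by
      rw [Function.update_of_ne (Finset.mem_erase.mp hm).1]
  rw [hP, hP, herase, hsum, Function.update_self]
  rcases hω with rfl | rfl
  · rw [show x + u₀ + (u i + σ⁻¹) = (x + u₀ + u i) + σ⁻¹ by ring,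
      show x + u₀ - (u i + σ⁻¹) = (x + u₀ - u i) - σ⁻¹ by ring,
      show x + u₀ - ((∑ k, u k) + σ⁻¹) = (x + u₀ - ∑ k, u k) - σ⁻¹ by ring,
      show x + u₀ + ((∑ k, u k) + σ⁻¹) = (x + u₀ + ∑ k, u k) + σ⁻¹ by ring,
      theta1_add_inv σ τ _ hσ, theta1_add_inv σ τ _ hσ, theta1_sub_inv σ τ _ hσ,
      theta1_sub_inv σ τ _ hσ, neg_div_neg_eq, neg_div_neg_eq]
  · rw [show x + u₀ + (u i + τ * σ⁻¹) = (x + u₀ + u i) + τ * σ⁻¹ by ring,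
      show x + u₀ - (u i + τ * σ⁻¹) = (x + u₀ - u i) - τ * σ⁻¹ by ring,
      show x + u₀ - ((∑ k, u k) + τ * σ⁻¹) = (x + u₀ - ∑ k, u k) - τ * σ⁻¹ by ring,
      show x + u₀ + ((∑ k, u k) + τ * σ⁻¹) = (x + u₀ + ∑ k, u k) + τ * σ⁻¹ by ring,
      theta1_add_tau σ τ _ hσ, theta1_add_tau σ τ _ hσ, theta1_sub_tau σ τ _ hσ,
      theta1_sub_tau σ τ _ hσ]
    have hfac : ∀ (a b A B : ℂ), (-Complex.exp a * A) / (-Complex.exp b * B) =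
        Complex.exp (a - b) * (A / B) := by
      intro a b A B
      rw [neg_mul, neg_mul, neg_div_neg_eq, mul_div_mul_comm, Complex.exp_sub]
    rw [hfac, hfac]
    have hone : Complex.exp ((-((Real.pi : ℂ) * Complex.I * τ) -
        2 * (Real.pi : ℂ) * Complex.I * σ * (x + u₀ + u i)) -
        (-((Real.pi : ℂ) * Complex.I * τ) +
          2 * (Real.pi : ℂ) * Complex.I * σ * (x + u₀ - u i))) *
        Complex.exp ((-((Real.pi : ℂ) * Complex.I * τ) +
          2 * (Real.pi : ℂ) * Complex.I * σ * (x + u₀ - ∑ k, u k)) -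
        (-((Real.pi : ℂ) * Complex.I * τ) -
          2 * (Real.pi : ℂ) * Complex.I * σ * (x + u₀ + ∑ k, u k))) = 1 := by
      rw [← Complex.exp_add, show ((-((Real.pi : ℂ) * Complex.I * τ) -
        2 * (Real.pi : ℂ) * Complex.I * σ * (x + u₀ + u i)) -
        (-((Real.pi : ℂ) * Complex.I * τ) +
          2 * (Real.pi : ℂ) * Complex.I * σ * (x + u₀ - u i))) +
        ((-((Real.pi : ℂ) * Complex.I * τ) +
          2 * (Real.pi : ℂ) * Complex.I * σ * (x + u₀ - ∑ k, u k)) -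
        (-((Real.pi : ℂ) * Complex.I * τ) -
          2 * (Real.pi : ℂ) * Complex.I * σ * (x + u₀ + ∑ k, u k))) = 0 from by ring,
        Complex.exp_zero]
    linear_combination (z * ((theta1 (x + u₀ + u i) σ τ / theta1 (x + u₀ - u i) σ τ) *
        ∏ m ∈ Finset.univ.erase i, theta1 (x + u₀ + u m) σ τ / theta1 (x + u₀ - u m) σ τ) *
      (theta1 (x + u₀ - ∑ k, u k) σ τ / theta1 (x + u₀ + ∑ k, u k) σ τ)) * hone

/-- The well-poised balanced term ratio
`h(x) = z (∏_{m=1}^{r-1} [x+u₀+u_m]/[x+u₀-u_m]) [x+u₀-∑u_k]/[x+u₀+∑u_k]`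
is an elliptic function of `x` and of each parameter `u₀, u₁, …, u_{r-1}` separately,
all with the same periods `σ⁻¹` and `τσ⁻¹` (wherever all denominators are nonzero). -/
theorem well_poised_balanced_total_ellipticity (σ τ : ℂ) (hσ : 0 < σ.im) (hτ : 0 < τ.im)
    (r : ℕ) (hr : 2 ≤ r) (z : ℂ) (u₀ : ℂ) (u : Fin (r - 1) → ℂ) :
    let H : ℂ → ℂ → (Fin (r - 1) → ℂ) → ℂ := fun x w₀ w =>
      z * (∏ m, theta1 (x + w₀ + w m) σ τ / theta1 (x + w₀ - w m) σ τ) *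
        (theta1 (x + w₀ - ∑ k, w k) σ τ / theta1 (x + w₀ + ∑ k, w k) σ τ)
    let D : ℂ → ℂ → (Fin (r - 1) → ℂ) → Prop := fun x w₀ w =>
      (∀ m, theta1 (x + w₀ - w m) σ τ ≠ 0) ∧ theta1 (x + w₀ + ∑ k, w k) σ τ ≠ 0
    ∀ ω : ℂ, (ω = σ⁻¹ ∨ ω = τ * σ⁻¹) → ∀ x : ℂ,
      (D x u₀ u → D (x + ω) u₀ u → H (x + ω) u₀ u = H x u₀ u) ∧
      (D x u₀ u → D x (u₀ + ω) u → H x (u₀ + ω) u = H x u₀ u) ∧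
      (∀ i : Fin (r - 1), D x u₀ u → D x u₀ (Function.update u i (u i + ω)) →
        H x u₀ (Function.update u i (u i + ω)) = H x u₀ u) := by
  have hσ0 : σ ≠ 0 := by
    rintro rfl
    simp at hσ
  intro H D ω hω x
  refine ⟨fun _ _ => ?_, fun _ _ => ?_, fun i _ _ => ?_⟩
  · show z * (∏ m, theta1 (x + ω + u₀ + u m) σ τ / theta1 (x + ω + u₀ - u m) σ τ) *
        (theta1 (x + ω + u₀ - ∑ k, u k) σ τ / theta1 (x + ω + u₀ + ∑ k, u k) σ τ) =
      z * (∏ m, theta1 (x + u₀ + u m) σ τ / theta1 (x + u₀ - u m) σ τ) *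
        (theta1 (x + u₀ - ∑ k, u k) σ τ / theta1 (x + u₀ + ∑ k, u k) σ τ)
    exact Hx σ τ hσ0 z ω hω x u₀ u
  · show z * (∏ m, theta1 (x + (u₀ + ω) + u m) σ τ / theta1 (x + (u₀ + ω) - u m) σ τ) *
        (theta1 (x + (u₀ + ω) - ∑ k, u k) σ τ / theta1 (x + (u₀ + ω) + ∑ k, u k) σ τ) =
      z * (∏ m, theta1 (x + u₀ + u m) σ τ / theta1 (x + u₀ - u m) σ τ) *
        (theta1 (x + u₀ - ∑ k, u k) σ τ / theta1 (x + u₀ + ∑ k, u k) σ τ)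
    have e1 : ∀ c : ℂ, x + (u₀ + ω) + c = x + ω + u₀ + c := fun c => by ring
    have e2 : ∀ c : ℂ, x + (u₀ + ω) - c = x + ω + u₀ - c := fun c => by ring
    simp only [e1, e2]
    exact Hx σ τ hσ0 z ω hω x u₀ u
  · exact Hu σ τ hσ0 z ω hω x u₀ u i
end

section
/- Let r ∈ ℕ, z ∈ ℂ, and u_1,…,u_r, v_1,…,v_r ∈ ℂ satisfy both the balancing condition u_1+…+u_r = v_1+…+v_r and the modularity condition u_1²+…+u_r² = v_1²+…+v_r². Then the term ratio h(x) = z·∏_{m=1}^r [x+u_m]/[x+v_m] is modular invariant: for every x ∈ ℂ at which all denominators involved are nonzero, z·∏_{m=1}^r [x+u_m; σ/τ, −1/τ]/[x+v_m; σ/τ, −1/τ] = z·∏_{m=1}^r [x+u_m; σ, τ]/[x+v_m; σ, τ], and likewise z·∏_{m=1}^r [x+u_m; σ, τ+1]/[x+v_m; σ, τ+1] = z·∏_{m=1}^r [x+u_m; σ, τ]/[x+v_m; σ, τ]. -/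
open scoped BigOperators

open Complex
open scoped Real

private lemma theta1_as_theta2 (u σ τ : ℂ) :
    theta1 u σ τ = -I * cexp ((π : ℂ) * I * τ / 4 + (π : ℂ) * I * σ * u) *
      jacobiTheta₂ (σ * u + τ / 2 + 1 / 2) τ := by
  have hts : (∑' n : ℤ, (-1 : ℂ) ^ n *
      Complex.exp ((Real.pi : ℂ) * Complex.I * τ * ((n : ℂ) + 1 / 2) ^ 2) *
      Complex.exp (2 * (Real.pi : ℂ) * Complex.I * σ * ((n : ℂ) + 1 / 2) * u)) =
      cexp ((π : ℂ) * I * τ / 4 + (π : ℂ) * I * σ * u) *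
        jacobiTheta₂ (σ * u + τ / 2 + 1 / 2) τ := by
    rw [jacobiTheta₂]
    refine Eq.trans (tsum_congr fun n => ?_) tsum_mul_left
    have h1 : ((-1 : ℂ)) ^ n = cexp ((n : ℂ) * ((π : ℂ) * I)) := by
      rw [Complex.exp_int_mul, Complex.exp_pi_mul_I]
    rw [h1, jacobiTheta₂_term, ← Complex.exp_add, ← Complex.exp_add, ← Complex.exp_add]
    congr 1
    push_cast
    ring
  rw [theta1, hts]
  exact (mul_assoc _ _ _).symm

private lemma theta1_T (u σ τ : ℂ) :
    theta1 u σ (τ + 1) = cexp ((π : ℂ) * I / 4) * theta1 u σ τ := by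
  rw [theta1, theta1, mul_left_comm]
  congr 1
  refine Eq.trans (tsum_congr fun n => ?_) tsum_mul_left
  have heven : Even (n ^ 2 + n) := by
    have h0 := Int.even_mul_succ_self n
    have h : n * (n + 1) = n ^ 2 + n := by ring
    rwa [h] at h0
  have h2 : cexp (((n ^ 2 + n : ℤ) : ℂ) * ((π : ℂ) * I)) = 1 := by
    rw [Complex.exp_int_mul, Complex.exp_pi_mul_I, heven.neg_one_zpow]
  have h3 : (π : ℂ) * I * (τ + 1) * ((n : ℂ) + 1 / 2) ^ 2 =
      (π : ℂ) * I * τ * ((n : ℂ) + 1 / 2) ^ 2 + (π : ℂ) * I / 4 +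
        ((n ^ 2 + n : ℤ) : ℂ) * ((π : ℂ) * I) := by push_cast; ring
  rw [h3, Complex.exp_add, Complex.exp_add, h2]
  ring

private lemma theta1_S {τ : ℂ} (hτ : 0 < τ.im) (σ u : ℂ) :
    theta1 u (σ / τ) (-1 / τ) =
      -I * (-I * τ) ^ (1 / 2 : ℂ) * cexp ((π : ℂ) * I * σ ^ 2 * u ^ 2 / τ) *
        theta1 u σ τ := by
  have hτ0 : τ ≠ 0 := by
    intro h; rw [h] at hτ; simp at hτ
  rw [theta1_as_theta2, theta1_as_theta2]
  have harg : σ / τ * u + -1 / τ / 2 + 1 / 2 =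
      (σ * u / τ + 1 / (2 * τ) + 1 / 2) + -1 / τ := by
    simp only [div_eq_mul_inv, mul_inv]
    ring
  rw [harg, jacobiTheta₂_add_left',
    jacobiTheta₂_functional_equation (σ * u + τ / 2 + 1 / 2) τ]
  have harg2 : (σ * u + τ / 2 + 1 / 2) / τ = σ * u / τ + 1 / (2 * τ) + 1 / 2 := by
    simp only [div_eq_mul_inv, mul_inv]
    linear_combination (1 / 2 : ℂ) * (mul_inv_cancel₀ hτ0)
  rw [harg2]
  set J := jacobiTheta₂ (σ * u / τ + 1 / (2 * τ) + 1 / 2) (-1 / τ) with hJ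
  have hA : ((-I * τ) ^ (1 / 2 : ℂ)) ≠ 0 := by
    simp only [ne_eq, cpow_eq_zero_iff, not_and_or, not_not, mul_eq_zero, not_or]
    left
    exact ⟨by simp [Complex.I_ne_zero], hτ0⟩
  set c1 : ℂ := (π : ℂ) * I * (-1 / τ) / 4 + (π : ℂ) * I * (σ / τ) * u with hc1
  set c2 : ℂ := -(π : ℂ) * I * (-1 / τ + 2 * (σ * u / τ + 1 / (2 * τ) + 1 / 2)) with hc2
  set c3 : ℂ := (π : ℂ) * I * σ ^ 2 * u ^ 2 / τ with hc3
  set c4 : ℂ := (π : ℂ) * I * τ / 4 + (π : ℂ) * I * σ * u with hc4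
  set c5 : ℂ := -(π : ℂ) * I * (σ * u + τ / 2 + 1 / 2) ^ 2 / τ with hc5
  have key : ∀ A : ℂ, A ≠ 0 →
      -I * cexp c1 * cexp c2 =
        -I * A * cexp c3 * (-I * cexp c4 * (1 / A * cexp c5)) := by
    intro A hA'
    have hL : -I * cexp c1 * cexp c2 = cexp (-((π : ℂ) * I) / 2 + c1 + c2) := by
      have hI : (-I : ℂ) = cexp (-((π : ℂ) * I) / 2) := by
        rw [show -((π : ℂ) * I) / 2 = -((π : ℂ) / 2) * I by ring, Complex.exp_mul_I]
        simp [Complex.cos_pi_div_two, Complex.sin_pi_div_two]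
      rw [hI, ← Complex.exp_add, ← Complex.exp_add]
    have hR : -I * A * cexp c3 * (-I * cexp c4 * (1 / A * cexp c5)) =
        cexp (-((π : ℂ) * I) + (c3 + c4 + c5)) := by
      have h1 : -I * A * cexp c3 * (-I * cexp c4 * (1 / A * cexp c5)) =
          (A * (1 / A)) * ((-I * -I) * (cexp c3 * cexp c4 * cexp c5)) := by ring
      rw [h1, mul_one_div_cancel hA', one_mul]
      have h2 : (-I : ℂ) * -I = -1 := by
        rw [neg_mul_neg, Complex.I_mul_I]
      have h4 : (-1 : ℂ) = cexp (-((π : ℂ) * I)) := by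
        rw [Complex.exp_neg, Complex.exp_pi_mul_I]
        norm_num
      rw [h2, ← Complex.exp_add, ← Complex.exp_add, h4, ← Complex.exp_add]
    rw [hL, hR]
    congr 1
    rw [hc1, hc2, hc3, hc4, hc5]
    simp only [div_eq_mul_inv, mul_inv]
    linear_combination ((π : ℂ) * I * (σ * u + τ / 4 + 1 / 2)) * (mul_inv_cancel₀ hτ0)
  calc -I * cexp c1 * (cexp c2 * J)
      = (-I * cexp c1 * cexp c2) * J := by ring
    _ = (-I * (-I * τ) ^ (1 / 2 : ℂ) * cexp c3 *
        (-I * cexp c4 * (1 / (-I * τ) ^ (1 / 2 : ℂ) * cexp c5))) * J := by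
        rw [key _ hA]
    _ = -I * (-I * τ) ^ (1 / 2 : ℂ) * cexp c3 *
        (-I * cexp c4 * (1 / (-I * τ) ^ (1 / 2 : ℂ) * cexp c5 * J)) := by ring

/-- Under the balancing condition `∑ u_m = ∑ v_m` and the modularity condition
`∑ u_m² = ∑ v_m²`, the term ratio `h(x) = z ∏ [x+u_m]/[x+v_m]` is modular
invariant under both `SL(2,ℤ)` generators. -/
theorem balanced_modular_term_ratio (σ τ : ℂ) (hσ : 0 < σ.im) (hτ : 0 < τ.im)
    (r : ℕ) (z : ℂ) (u v : Fin r → ℂ)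
    (hbal : ∑ m, u m = ∑ m, v m)
    (hmod : ∑ m, (u m) ^ 2 = ∑ m, (v m) ^ 2) (x : ℂ)
    (hd0 : ∀ m, theta1 (x + v m) σ τ ≠ 0)
    (hd1 : ∀ m, theta1 (x + v m) (σ / τ) (-1 / τ) ≠ 0)
    (hd2 : ∀ m, theta1 (x + v m) σ (τ + 1) ≠ 0) :
    (z * ∏ m, theta1 (x + u m) (σ / τ) (-1 / τ) / theta1 (x + v m) (σ / τ) (-1 / τ) =
      z * ∏ m, theta1 (x + u m) σ τ / theta1 (x + v m) σ τ) ∧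
    (z * ∏ m, theta1 (x + u m) σ (τ + 1) / theta1 (x + v m) σ (τ + 1) =
      z * ∏ m, theta1 (x + u m) σ τ / theta1 (x + v m) σ τ) := by
  have hτ0 : τ ≠ 0 := by intro h; rw [h] at hτ; simp at hτ
  have hA : ((-I * τ) ^ (1 / 2 : ℂ)) ≠ 0 := by
    simp only [ne_eq, cpow_eq_zero_iff, not_and_or, not_not, mul_eq_zero, not_or]
    left
    exact ⟨by simp [Complex.I_ne_zero], hτ0⟩
  have hK : (-I * (-I * τ) ^ (1 / 2 : ℂ)) ≠ 0 :=
    mul_ne_zero (neg_ne_zero.mpr I_ne_zero) hA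
  have hsum : ∑ m, ((x + u m) ^ 2 - (x + v m) ^ 2) = 0 := by
    have h : ∑ m, (x + u m) ^ 2 = ∑ m, (x + v m) ^ 2 := by
      simp only [add_sq, Finset.sum_add_distrib]
      rw [← Finset.mul_sum, ← Finset.mul_sum, hbal, hmod]
    rw [Finset.sum_sub_distrib, h, sub_self]
  constructor
  · congr 1
    calc ∏ m, theta1 (x + u m) (σ / τ) (-1 / τ) / theta1 (x + v m) (σ / τ) (-1 / τ)
        = ∏ m, cexp ((π : ℂ) * I * σ ^ 2 / τ * ((x + u m) ^ 2 - (x + v m) ^ 2)) *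
            (theta1 (x + u m) σ τ / theta1 (x + v m) σ τ) := by
          refine Finset.prod_congr rfl fun m _ => ?_
          rw [theta1_S hτ σ (x + u m), theta1_S hτ σ (x + v m),
            mul_assoc (-I * (-I * τ) ^ (1 / 2 : ℂ)),
            mul_assoc (-I * (-I * τ) ^ (1 / 2 : ℂ)),
            mul_div_mul_left _ _ hK,
            show cexp ((π : ℂ) * I * σ ^ 2 / τ * ((x + u m) ^ 2 - (x + v m) ^ 2)) =
              cexp ((π : ℂ) * I * σ ^ 2 * (x + u m) ^ 2 / τ) /
                cexp ((π : ℂ) * I * σ ^ 2 * (x + v m) ^ 2 / τ) by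
              rw [← Complex.exp_sub]; congr 1; ring,
            div_mul_div_comm]
      _ = (∏ m, cexp ((π : ℂ) * I * σ ^ 2 / τ * ((x + u m) ^ 2 - (x + v m) ^ 2))) *
            ∏ m, theta1 (x + u m) σ τ / theta1 (x + v m) σ τ := Finset.prod_mul_distrib
      _ = ∏ m, theta1 (x + u m) σ τ / theta1 (x + v m) σ τ := by
          rw [← Complex.exp_sum, ← Finset.mul_sum, hsum, mul_zero, Complex.exp_zero, one_mul]
  · congr 1
    refine Finset.prod_congr rfl fun m _ => ?_
    rw [theta1_T (x + u m) σ τ, theta1_T (x + v m) σ τ,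
      mul_div_mul_left _ _ (Complex.exp_ne_zero _)]
end
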